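/- arXiv:2011.07890 — 3 statements merged into one kernel-verified Lean document; each statement's English description precedes it below -/
import Mathlib

section
/- Fix a real 0<g<1. For r>0 set u=e^{−r}. Then lim_{r→0+} r·log((g·u;u)_∞) = −Li₂(g), where Li₂(t)=∑_{k≥1}t^k/k². -/
open MeasureTheory Filter Topology Set

noncomputable section



/-- An `(M,N)`-based plane partition, with 0-based indices: the entry `part i j`
corresponds to `Λ_{i+1,j+1}`. -/
structure PlanePartition (M N : ℕ∞) where
  part : ℕ → ℕ → ℕ
  antitone_fst : ∀ i j, part (i + 1) j ≤ part i j
  antitone_snd : ∀ i j, part i (j + 1) ≤ part i j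
  supp_fst : ∀ i j : ℕ, M ≤ (i : ℕ∞) → part i j = 0
  supp_snd : ∀ i j : ℕ, N ≤ (j : ℕ∞) → part i j = 0
  finite_supp : {p : ℕ × ℕ | part p.1 p.2 ≠ 0}.Finite

/-- Left volume: sum of the entries strictly to the left of the diagonal. -/
def PlanePartition.leftVol {M N : ℕ∞} (Λ : PlanePartition M N) : ℕ :=
  ∑ᶠ p : ℕ × ℕ, if p.2 < p.1 then Λ.part p.1 p.2 else 0

/-- Central volume (trace): sum of the diagonal entries. -/
def PlanePartition.centralVol {M N : ℕ∞} (Λ : PlanePartition M N) : ℕ :=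
  ∑ᶠ i : ℕ, Λ.part i i

/-- Right volume: sum of the entries strictly to the right of the diagonal. -/
def PlanePartition.rightVol {M N : ℕ∞} (Λ : PlanePartition M N) : ℕ :=
  ∑ᶠ p : ℕ × ℕ, if p.1 < p.2 then Λ.part p.1 p.2 else 0

/-- The Muttalib–Borodin weight `Q^{left vol} (a √(Q Q̃))^{central vol} Q̃^{right vol}`,
where `Q = q^η` and `Q̃ = q^θ`. -/
def mbWeight (q a η θ : ℝ) {M N : ℕ∞} (Λ : PlanePartition M N) : ℝ :=
  (q ^ η) ^ Λ.leftVol * (a * Real.sqrt ((q ^ η) * (q ^ θ))) ^ Λ.centralVol *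
    (q ^ θ) ^ Λ.rightVol

/-- The probability of the event `E` under the Muttalib–Borodin measure on
`(M,N)`-based plane partitions. -/
def mbProb (q a η θ : ℝ) (M N : ℕ∞) (E : Set (PlanePartition M N)) : ℝ :=
  (∑' Λ : E, mbWeight q a η θ Λ.1) / (∑' Λ : PlanePartition M N, mbWeight q a η θ Λ)

/-- The Fredholm series `det(1-K)_{L²(X)}
  = 1 + ∑_{m ≥ 1} ((-1)^m/m!) ∫_{X^m} det[K(x_i,x_j)] dx₁⋯dx_m`. -/
def fredholmDet (K : ℝ → ℝ → ℂ) (X : Set ℝ) : ℂ :=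
  1 + ∑' m : ℕ,
    ((-1 : ℂ) ^ (m + 1) / (m + 1).factorial) *
      ∫ x : Fin (m + 1) → ℝ in {x | ∀ i, x i ∈ X},
        Matrix.det (Matrix.of fun i j => K (x i) (x j))

/-- `F_he(ζ) = Γ(α/(2η) - ζ/η + 1/2) / Γ(α/(2θ) + ζ/θ + 1/2)`. -/
def Fhe (α η θ : ℝ) (ζ : ℂ) : ℂ :=
  Complex.Gamma (α / (2 * η) - ζ / η + 1 / 2) / Complex.Gamma (α / (2 * θ) + ζ / θ + 1 / 2)

/-- The hard-edge kernel `K_he(x,y)`, a double contour integral over the vertical lines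
`δ + iℝ` (in `ζ`) and `-δ + iℝ` (in `ω`), with the (valid) choice `δ = min(η,θ)/4`. -/
def Khe (α η θ : ℝ) (x y : ℝ) : ℂ :=
  (((x * y) ^ (-(1 / 2) : ℝ) : ℝ) : ℂ) * ((2 * Real.pi * Complex.I) ^ 2)⁻¹ *
    ∫ t : ℝ, (∫ s : ℝ,
      (Fhe α η θ (min η θ / 4 + t * Complex.I) / Fhe α η θ (-(min η θ / 4) + s * Complex.I)) *
        (x : ℂ) ^ (min η θ / 4 + t * Complex.I) * (y : ℂ) ^ (-(-(min η θ / 4) + s * Complex.I)) /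
        ((min η θ / 4 + t * Complex.I) - (-(min η θ / 4) + s * Complex.I)) * Complex.I) *
      Complex.I

/-- `K̃_he(x,y) = e^{-x/2-y/2} K_he(e^{-x}, e^{-y})`. -/
def Kthe (α η θ : ℝ) (x y : ℝ) : ℂ :=
  Real.exp (-x / 2 - y / 2) * Khe α η θ (Real.exp (-x)) (Real.exp (-y))




/-- The infinite q-Pochhammer symbol `(x;u)_∞ = ∏_{i ≥ 0} (1 - x u^i)` in `ℂ`. -/
def qPochInf (x u : ℂ) : ℂ := ∏' i : ℕ, (1 - x * u ^ i)

/-- The point `r e^{iφ}` on the circle of radius `r`. -/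
def zCirc (r φ : ℝ) : ℂ := (r : ℂ) * Complex.exp (φ * Complex.I)

/-- `F_d(z) = (√a Q̃^{1/2}/z; Q̃)_∞ / (√a Q^{1/2} z; Q)_∞` with `Q = q^η`, `Q̃ = q^θ`
(the case `M = N = ∞`). -/
def Fd (q a η θ : ℝ) (z : ℂ) : ℂ :=
  qPochInf (((Real.sqrt a * (q ^ θ) ^ ((1 : ℝ) / 2) : ℝ) : ℂ) / z) ((q ^ θ : ℝ) : ℂ) /
    qPochInf (((Real.sqrt a * (q ^ η) ^ ((1 : ℝ) / 2) : ℝ) : ℂ) * z) ((q ^ η : ℝ) : ℂ)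

/-- A (valid) choice of the contour parameter `δ` for the discrete kernel:
`√a Q̃^{1/2} < 1 - δ` and `(1 + δ) √a Q^{1/2} < 1`. -/
def ddelta (q a η θ : ℝ) : ℝ :=
  min ((1 - Real.sqrt a * (q ^ θ) ^ ((1 : ℝ) / 2)) / 2)
    (((Real.sqrt a * (q ^ η) ^ ((1 : ℝ) / 2))⁻¹ - 1) / 2)

/-- The discrete kernel `K_d(k,ℓ)` with `M = N = ∞`, evaluated at the half-integers
`k = κ + 1/2` and `ℓ = l + 1/2`; note that then `z^{-k+1/2} = z^{-κ}` and
`w^{ℓ+1/2} = w^{l+1}` are integer powers. -/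
def Kd (q a η θ : ℝ) (κ l : ℤ) : ℂ :=
  ((2 * Real.pi : ℂ) ^ 2)⁻¹ *
    ∫ φ in Set.Ioc (-Real.pi) Real.pi, ∫ ψ in Set.Ioc (-Real.pi) Real.pi,
      Fd q a η θ (zCirc (1 + ddelta q a η θ) φ) / Fd q a η θ (zCirc (1 - ddelta q a η θ) ψ) *
        zCirc (1 + ddelta q a η θ) φ ^ (-κ) * zCirc (1 - ddelta q a η θ) ψ ^ (l + 1) /
        (zCirc (1 + ddelta q a η θ) φ - zCirc (1 - ddelta q a η θ) ψ)

/-- The Airy kernel, as a double contour integral over the vertical lines `1 + iℝ`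
(in `ζ`) and `-1 + iℝ` (in `ω`). -/
def airyKernel (x y : ℝ) : ℂ :=
  ((2 * Real.pi * Complex.I) ^ 2)⁻¹ *
    ∫ t : ℝ, (∫ s : ℝ,
      Complex.exp ((1 + t * Complex.I) ^ 3 / 3 - x * (1 + t * Complex.I)) *
        Complex.exp (-(-1 + s * Complex.I) ^ 3 / 3 + y * (-1 + s * Complex.I)) /
        ((1 + t * Complex.I) - (-1 + s * Complex.I)) * Complex.I) * Complex.I

/-- The dilogarithm `Li₂(t) = ∑_{k ≥ 1} t^k / k²`. -/
def Li2 (t : ℝ) : ℝ := ∑' k : ℕ, t ^ (k + 1) / ((k : ℝ) + 1) ^ 2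

/-- The saddle point `z_c` associated to `(a, η, θ)` (with `b = √a`). -/
def zc (a η θ : ℝ) : ℝ :=
  (Real.sqrt a * (θ - η) + Real.sqrt (4 * η * θ + a * (θ - η) ^ 2)) / (2 * θ)

/-- `v_c = -η⁻¹ log(1 - b z_c) - θ⁻¹ log(1 - b / z_c)`; this is the constant `c₁`. -/
def vc (a η θ : ℝ) : ℝ :=
  -η⁻¹ * Real.log (1 - Real.sqrt a * zc a η θ) - θ⁻¹ * Real.log (1 - Real.sqrt a / zc a η θ)

/-- The action `S(z) = η⁻¹ Li₂(b z) - θ⁻¹ Li₂(b / z) - v_c log z`. -/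
def Sfun (a η θ : ℝ) (z : ℝ) : ℝ :=
  η⁻¹ * Li2 (Real.sqrt a * z) - θ⁻¹ * Li2 (Real.sqrt a / z) - vc a η θ * Real.log z

/-- The constant `c₂ = ((1/2) ((z d/dz)³ S)(z_c))^{1/3}`. -/
def c2const (a η θ : ℝ) : ℝ :=
  ((1 / 2) * ((fun f : ℝ → ℝ => fun z => z * deriv f z)^[3] (Sfun a η θ)) (zc a η θ)) ^
    ((1 : ℝ) / 3)

/-- The finite q-Pochhammer symbol `(x;u)_n = ∏_{0 ≤ i < n} (1 - x u^i)` in `ℝ`. -/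
def qPoch (x u : ℝ) (n : ℕ) : ℝ := ∏ i ∈ Finset.range n, (1 - x * u ^ i)

/-- The density (unnormalized) of the continuous Muttalib–Borodin ensemble. -/
def mbDensity (α η θ : ℝ) (M N : ℕ) (x : Fin M → ℝ) : ℝ :=
  (∏ i : Fin M, ∏ j : Fin M,
      if i < j then (x j ^ η - x i ^ η) * (x j ^ θ - x i ^ θ) else 1) *
    ∏ i : Fin M, x i ^ (α + (η + θ) / 2 - 1) * (1 - x i ^ θ) ^ (N - M)

/-- The probability of the event `E` under the continuous Muttalib–Borodin ensemble with
parameters `(α, η, θ, M, N)`, defined as a ratio of integrals over ordered tuples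
`0 < x₁ < ⋯ < x_M < 1`. -/
def contMBProb (α η θ : ℝ) (M N : ℕ) (E : Set (Fin M → ℝ)) : ℝ :=
  (∫ x in {x : Fin M → ℝ | (∀ i, 0 < x i ∧ x i < 1) ∧ StrictMono x ∧ x ∈ E},
      mbDensity α η θ M N x) /
    ∫ x in {x : Fin M → ℝ | (∀ i, 0 < x i ∧ x i < 1) ∧ StrictMono x},
      mbDensity α η θ M N x

/-- A step of a ↘-path: one coordinate increases by exactly 1. -/
def DRStep (p q : ℕ × ℕ) : Prop :=
  (q.1 = p.1 + 1 ∧ q.2 = p.2) ∨ (q.1 = p.1 ∧ q.2 = p.2 + 1)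

/-- A step of a ↗-path: the first coordinate decreases by 1, or the second increases by 1. -/
def URStep (p q : ℕ × ℕ) : Prop :=
  (q.1 + 1 = p.1 ∧ q.2 = p.2) ∨ (q.1 = p.1 ∧ q.2 = p.2 + 1)

/-- Bessel function of the first kind (series form), for `t > 0`. -/
def besselJ (α t : ℝ) : ℝ :=
  ∑' k : ℕ, (-1 : ℝ) ^ k * (t / 2) ^ (2 * (k : ℝ) + α) /
    ((k.factorial : ℝ) * Real.Gamma ((k : ℝ) + α + 1))


private lemma W_tendsto : Tendsto (fun t : ℝ => t / (Real.exp t - 1)) (𝓝[≠] (0:ℝ)) (𝓝 1) := by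
  have h : HasDerivAt Real.exp 1 0 := by simpa using Real.hasDerivAt_exp 0
  have h2 := hasDerivAt_iff_tendsto_slope.mp h
  have h3 : Tendsto (fun t : ℝ => (Real.exp t - 1) / t) (𝓝[≠] (0:ℝ)) (𝓝 1) := by
    simpa [slope_fun_def_field, Real.exp_zero] using h2
  simpa [inv_div] using h3.inv₀ one_ne_zero

private lemma key_identity (g : ℝ) (hg0 : 0 < g) (hg1 : g < 1) {r : ℝ} (hr : 0 < r) :
    r * Real.log (∏' i : ℕ, (1 - g * Real.exp (-r) ^ (i + 1))) =
      ∑' k : ℕ, -(g ^ (k + 1) / ((k : ℝ) + 1) ^ 2 *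
        ((((k : ℝ) + 1) * r) / (Real.exp (((k : ℝ) + 1) * r) - 1))) := by
  set u := Real.exp (-r) with hu
  have hu0 : 0 < u := Real.exp_pos _
  have hu1 : u < 1 := Real.exp_lt_one_iff.mpr (by linarith)
  have hx0 : ∀ i : ℕ, 0 < g * u ^ (i + 1) := fun i => mul_pos hg0 (pow_pos hu0 _)
  have hx1 : ∀ i : ℕ, g * u ^ (i + 1) < 1 := fun i =>
    lt_of_le_of_lt (mul_le_of_le_one_right hg0.le (pow_le_one₀ hu0.le hu1.le)) hg1
  set a : ℕ → ℕ → ℝ := fun i k => (g * u ^ (i + 1)) ^ (k + 1) / ((k : ℝ) + 1) with ha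
  have ha_nonneg : ∀ i k, 0 ≤ a i k := fun i k =>
    div_nonneg (pow_nonneg (hx0 i).le _) (by positivity)
  have hasum : Summable (Function.uncurry a) := by
    refine Summable.of_nonneg_of_le (fun p => ha_nonneg p.1 p.2) (fun p => ?_)
      ((summable_geometric_of_lt_one hu0.le hu1).mul_of_nonneg
        (summable_geometric_of_lt_one hg0.le hg1)
        (fun i => by positivity) (fun k => by positivity))
    obtain ⟨i, k⟩ := p
    show a i k ≤ u ^ i * g ^ k
    calc a i k ≤ (g * u ^ (i + 1)) ^ (k + 1) := by
          apply div_le_self (pow_nonneg (hx0 i).le _)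
          simp
      _ = g ^ (k + 1) * u ^ ((i + 1) * (k + 1)) := by rw [mul_pow, ← pow_mul]
      _ ≤ g ^ k * u ^ i := by
          apply mul_le_mul (pow_le_pow_of_le_one hg0.le hg1.le (Nat.le_succ k))
            (pow_le_pow_of_le_one hu0.le hu1.le ?_) (by positivity) (by positivity)
          calc i ≤ i + 1 := Nat.le_succ i
            _ ≤ (i + 1) * (k + 1) := Nat.le_mul_of_pos_right _ k.succ_pos
      _ = u ^ i * g ^ k := mul_comm _ _
  have hlog : ∀ i : ℕ, HasSum (fun k => a i k) (-Real.log (1 - g * u ^ (i + 1))) := fun i =>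
    Real.hasSum_pow_div_log_of_abs_lt_one (by rw [abs_of_pos (hx0 i)]; exact hx1 i)
  have hlogeq : ∀ i : ℕ, Real.log (1 - g * u ^ (i + 1)) = -∑' k, a i k := fun i => by
    rw [(hlog i).tsum_eq, neg_neg]
  have hrows : Summable (fun i => ∑' k, a i k) :=
    ((summable_prod_of_nonneg (fun p => ha_nonneg p.1 p.2)).1 hasum).2
  have hSsum : Summable (fun i => Real.log (1 - g * u ^ (i + 1))) :=
    hrows.neg.congr fun i => (hlogeq i).symm
  -- log of the product equals the sum of logs
  have hP : HasProd (fun i : ℕ => 1 - g * u ^ (i + 1))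
      (Real.exp (∑' i, Real.log (1 - g * u ^ (i + 1)))) := by
    have h1 := hSsum.hasSum.rexp
    have heq : (Real.exp ∘ fun i : ℕ => Real.log (1 - g * u ^ (i + 1))) =
        fun i : ℕ => 1 - g * u ^ (i + 1) :=
      funext fun i => Real.exp_log (by linarith [hx1 i])
    rwa [heq] at h1
  have hlogP : Real.log (∏' i : ℕ, (1 - g * u ^ (i + 1))) =
      ∑' i, Real.log (1 - g * u ^ (i + 1)) := by
    rw [hP.tprod_eq, Real.log_exp]
  -- evaluate the double sum
  have hgeom : ∀ k : ℕ, ∑' i : ℕ, a i k =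
      g ^ (k + 1) / ((k : ℝ) + 1) * (u ^ (k + 1) * (1 - u ^ (k + 1))⁻¹) := by
    intro k
    have hterm : ∀ i : ℕ, a i k =
        g ^ (k + 1) / ((k : ℝ) + 1) * (u ^ (k + 1) * (u ^ (k + 1)) ^ i) := by
      intro i
      have hk : ((k : ℝ) + 1) ≠ 0 := by positivity
      simp only [ha]
      field_simp
      ring_nf
    rw [tsum_congr hterm, tsum_mul_left, tsum_mul_left,
      tsum_geometric_of_lt_one (pow_nonneg hu0.le _) (pow_lt_one₀ hu0.le hu1 k.succ_ne_zero)]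
  have hswap : ∑' i : ℕ, ∑' k : ℕ, a i k = ∑' k : ℕ, ∑' i : ℕ, a i k := (Summable.tsum_comm hasum).symm
  rw [hlogP, tsum_congr hlogeq, tsum_neg, hswap, ← tsum_neg, ← tsum_mul_left]
  refine tsum_congr fun k => ?_
  rw [hgeom k]
  have hk : (0:ℝ) < (k : ℝ) + 1 := by positivity
  set t : ℝ := ((k : ℝ) + 1) * r with htdef
  have ht : 0 < t := mul_pos hk hr
  have hupow : u ^ (k + 1) = Real.exp (-t) := by
    rw [hu, ← Real.exp_nat_mul]
    congr 1
    push_cast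
    ring
  have hE1 : 1 < Real.exp t := Real.one_lt_exp_iff.mpr ht
  rw [hupow, Real.exp_neg]
  have hE0 : Real.exp t ≠ 0 := (Real.exp_pos t).ne'
  have hEne : Real.exp t - 1 ≠ 0 := by linarith
  have h1E : (1 : ℝ) - (Real.exp t)⁻¹ ≠ 0 := by
    have : (Real.exp t)⁻¹ < 1 := inv_lt_one_of_one_lt₀ hE1
    linarith
  field_simp
  ring

/-- `lim_{r → 0+} r log (g u; u)_∞ = -Li₂(g)` with `u = e^{-r}`. -/
theorem statement12 (g : ℝ) (hg0 : 0 < g) (hg1 : g < 1) :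
    Tendsto (fun r : ℝ => r * Real.log (∏' i : ℕ, (1 - g * Real.exp (-r) ^ (i + 1))))
      (𝓝[>] 0) (𝓝 (-Li2 g)) := by

  set c : ℕ → ℝ := fun k => g ^ (k + 1) / ((k : ℝ) + 1) ^ 2 with hc
  have hcsum : Summable c := by
    refine Summable.of_nonneg_of_le (fun k => by positivity) (fun k => ?_)
      (summable_geometric_of_lt_one hg0.le hg1)
    calc c k ≤ g ^ (k + 1) := div_le_self (by positivity) (by nlinarith [Nat.cast_nonneg (α := ℝ) k])
      _ ≤ g ^ k := pow_le_pow_of_le_one hg0.le hg1.le (Nat.le_succ k)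
  have hab : ∀ k : ℕ, Tendsto (fun r : ℝ =>
      -(c k * ((((k : ℝ) + 1) * r) / (Real.exp (((k : ℝ) + 1) * r) - 1)))) (𝓝[>] 0)
      (𝓝 (-(c k))) := by
    intro k
    have hmul : Tendsto (fun r : ℝ => ((k : ℝ) + 1) * r) (𝓝[>] (0:ℝ)) (𝓝[≠] (0:ℝ)) := by
      apply tendsto_nhdsWithin_of_tendsto_nhds_of_eventually_within
      · have h0 : Tendsto (fun r : ℝ => ((k : ℝ) + 1) * r) (𝓝 0) (𝓝 0) := by
          simpa using (show Continuous (fun r : ℝ => ((k : ℝ) + 1) * r) from continuous_const.mul continuous_id).tendsto (0:ℝ)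
        exact h0.mono_left nhdsWithin_le_nhds
      · filter_upwards [self_mem_nhdsWithin] with r hr
        have : (0:ℝ) < ((k : ℝ) + 1) * r := mul_pos (by positivity) hr
        exact this.ne'
    have := ((W_tendsto.comp hmul).const_mul (c k)).neg
    simpa using this
  have hbound : ∀ᶠ r in 𝓝[>] (0:ℝ), ∀ k : ℕ,
      ‖-(c k * ((((k : ℝ) + 1) * r) / (Real.exp (((k : ℝ) + 1) * r) - 1)))‖ ≤ c k := by
    filter_upwards [self_mem_nhdsWithin] with r hr k
    set t : ℝ := ((k : ℝ) + 1) * r with htdef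
    have ht : 0 < t := mul_pos (by positivity) hr
    have hden : t ≤ Real.exp t - 1 := by linarith [Real.add_one_le_exp t]
    have hden0 : (0:ℝ) < Real.exp t - 1 := lt_of_lt_of_le ht hden
    rw [norm_neg, Real.norm_eq_abs,
      abs_of_nonneg (mul_nonneg (by positivity) (div_nonneg ht.le hden0.le))]
    exact mul_le_of_le_one_right (by positivity) ((div_le_one hden0).mpr hden)
  have h1 := tendsto_tsum_of_dominated_convergence hcsum hab hbound
  have h2 : ∑' k : ℕ, -(c k) = -Li2 g := by rw [tsum_neg]; rfl
  rw [h2] at h1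
  refine h1.congr' ?_
  filter_upwards [self_mem_nhdsWithin] with r hr
  exact (key_identity g hg0 hg1 hr).symm

end
end

section
/- Fix reals 0<a<1 and η,θ>0, and let b=√a, z_c, v_c and S be the associated saddle-point data. Then 0<b·z_c<1 and 0<b/z_c<1, the function S is twice differentiable at z_c, and S′(z_c)=0 and S″(z_c)=0. -/
open MeasureTheory Filter Topology Set

noncomputable section



section Statement13Aux

lemma li2_hasDerivAt_tsum {t : ℝ} (ht : |t| < 1) :
    HasDerivAt Li2 (∑' k : ℕ, t ^ k / ((k : ℝ) + 1)) t := by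
  set r : ℝ := (|t| + 1) / 2 with hrdef
  have habs : 0 ≤ |t| := abs_nonneg t
  have hr0 : 0 < r := by rw [hrdef]; linarith
  have hr1 : r < 1 := by rw [hrdef]; linarith
  have htr : |t| < r := by rw [hrdef]; linarith
  have key : HasDerivAt (fun z : ℝ => ∑' k : ℕ, z ^ (k + 1) / ((k : ℝ) + 1) ^ 2)
      (∑' k : ℕ, t ^ k / ((k : ℝ) + 1)) t := by
    refine hasDerivAt_tsum_of_isPreconnected
      (u := fun k : ℕ => r ^ k) (y₀ := 0)
      (g := fun (k : ℕ) (z : ℝ) => z ^ (k + 1) / ((k : ℝ) + 1) ^ 2)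
      (g' := fun (k : ℕ) (z : ℝ) => z ^ k / ((k : ℝ) + 1))
      (summable_geometric_of_lt_one hr0.le hr1)
      (isOpen_Ioo (a := -r) (b := r))
      (convex_Ioo _ _).isPreconnected
      ?_ ?_ ?_ ?_ ?_
    · intro k z _
      have h1 : HasDerivAt (fun z : ℝ => z ^ (k + 1)) ((k + 1 : ℕ) * z ^ k) z :=
        hasDerivAt_pow (k + 1) z
      have h2 := h1.div_const (((k : ℝ) + 1) ^ 2)
      refine h2.congr_deriv ?_
      have hk : ((k : ℝ) + 1) ≠ 0 := by positivity
      push_cast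
      field_simp
    · intro k z hz
      have hz' : |z| ≤ r := by
        rw [abs_le]; exact ⟨hz.1.le, hz.2.le⟩
      have hk1 : (1:ℝ) ≤ (k : ℝ) + 1 := by
        have := Nat.cast_nonneg (α := ℝ) k; linarith
      have h1 : ‖z ^ k / ((k : ℝ) + 1)‖ = |z| ^ k / ((k : ℝ) + 1) := by
        rw [Real.norm_eq_abs, abs_div, abs_pow, abs_of_pos (by positivity : (0:ℝ) < (k:ℝ)+1)]
      rw [h1]
      calc |z| ^ k / ((k : ℝ) + 1) ≤ |z| ^ k / 1 :=
            div_le_div_of_nonneg_left (by positivity) one_pos hk1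
        _ = |z| ^ k := div_one _
        _ ≤ r ^ k := pow_le_pow_left₀ (abs_nonneg z) hz' k
    · exact ⟨by linarith, hr0⟩
    · simpa using summable_zero
    · exact ⟨by linarith [(abs_lt.mp htr).1], (abs_lt.mp htr).2⟩
  exact key

lemma li2_hasDerivAt {t : ℝ} (h0 : 0 < t) (h1 : t < 1) :
    HasDerivAt Li2 (-Real.log (1 - t) / t) t := by
  have ht : |t| < 1 := abs_lt.2 ⟨by linarith, h1⟩
  have h := (Real.hasSum_pow_div_log_of_abs_lt_one ht).div_const t
  have h2 : HasSum (fun k : ℕ => t ^ k / ((k : ℝ) + 1)) (-Real.log (1 - t) / t) := by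
    rw [show (fun k : ℕ => t ^ k / ((k : ℝ) + 1)) = (fun i : ℕ => t ^ (i + 1) / ((i : ℝ) + 1) / t) from by
      funext k
      rw [pow_succ]
      field_simp]
    exact h
  rw [← h2.tsum_eq]
  exact li2_hasDerivAt_tsum ht

lemma zc_quad (a η θ : ℝ) (ha0 : 0 < a) (hη : 0 < η) (hθ : 0 < θ) :
    θ * zc a η θ ^ 2 - Real.sqrt a * (θ - η) * zc a η θ - η = 0 := by
  set b := Real.sqrt a with hbdef
  set d := Real.sqrt (4 * η * θ + a * (θ - η) ^ 2) with hddef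
  have hd : d ^ 2 = 4 * η * θ + a * (θ - η) ^ 2 := Real.sq_sqrt (by positivity)
  have hb : b ^ 2 = a := Real.sq_sqrt ha0.le
  rw [zc, ← hbdef, ← hddef]
  field_simp
  linear_combination hd - (θ-η)^2 * hb

lemma zc_pos (a η θ : ℝ) (ha0 : 0 < a) (hη : 0 < η) (hθ : 0 < θ) : 0 < zc a η θ := by
  have hb : 0 < Real.sqrt a := Real.sqrt_pos.mpr ha0
  have hb2 : Real.sqrt a ^ 2 = a := Real.sq_sqrt ha0.le
  have hd0 : 0 < Real.sqrt (4 * η * θ + a * (θ - η) ^ 2) := Real.sqrt_pos.mpr (by positivity)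
  have hd : Real.sqrt (4 * η * θ + a * (θ - η) ^ 2) ^ 2 = 4 * η * θ + a * (θ - η) ^ 2 :=
    Real.sq_sqrt (by positivity)
  have hnum : 0 < Real.sqrt a * (θ - η) + Real.sqrt (4 * η * θ + a * (θ - η) ^ 2) := by
    nlinarith
  rw [zc]
  positivity

lemma zc_gt (a η θ : ℝ) (ha0 : 0 < a) (ha1 : a < 1) (hη : 0 < η) (hθ : 0 < θ) :
    Real.sqrt a < zc a η θ := by
  have hq := zc_quad a η θ ha0 hη hθ
  have hz := zc_pos a η θ ha0 hη hθ
  have hb : 0 < Real.sqrt a := Real.sqrt_pos.mpr ha0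
  have hb2 : Real.sqrt a ^ 2 = a := Real.sq_sqrt ha0.le
  have hP : 0 < θ * zc a η θ + Real.sqrt a * η := by positivity
  have h1 : (zc a η θ - Real.sqrt a) * (θ * zc a η θ + Real.sqrt a * η)
      = η * (1 - a) := by
    linear_combination hq - η * hb2
  by_contra h
  push_neg at h
  nlinarith [mul_nonneg (sub_nonneg.2 h) hP.le]

lemma zc_lt (a η θ : ℝ) (ha0 : 0 < a) (ha1 : a < 1) (hη : 0 < η) (hθ : 0 < θ) :
    Real.sqrt a * zc a η θ < 1 := by
  have hq := zc_quad a η θ ha0 hη hθ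
  have hz := zc_pos a η θ ha0 hη hθ
  have hb : 0 < Real.sqrt a := Real.sqrt_pos.mpr ha0
  have hb2 : Real.sqrt a ^ 2 = a := Real.sq_sqrt ha0.le
  have hP : 0 < θ * zc a η θ + Real.sqrt a * η := by positivity
  have h1 : (1 - Real.sqrt a * zc a η θ) * (θ * zc a η θ + Real.sqrt a * η)
      = θ * zc a η θ * (1 - a) := by
    linear_combination (-(Real.sqrt a)) * hq - (θ * zc a η θ) * hb2
  by_contra h
  push_neg at h
  nlinarith [mul_nonneg (sub_nonneg.2 h) hP.le,
    mul_pos (mul_pos hθ hz) (by linarith : (0:ℝ) < 1 - a)]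

lemma sfun_hasDerivAt (a η θ : ℝ) (ha0 : 0 < a) (hη : 0 < η) (hθ : 0 < θ)
    {z : ℝ} (hz1 : Real.sqrt a < z) (hz2 : Real.sqrt a * z < 1) :
    HasDerivAt (Sfun a η θ)
      ((-η⁻¹ * Real.log (1 - Real.sqrt a * z) - θ⁻¹ * Real.log (1 - Real.sqrt a / z)
        - vc a η θ) / z) z := by
  have hb : 0 < Real.sqrt a := Real.sqrt_pos.mpr ha0
  have hz0 : 0 < z := lt_trans hb hz1
  have h1 : 0 < Real.sqrt a * z := mul_pos hb hz0
  have h3 : 0 < Real.sqrt a / z := div_pos hb hz0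
  have h4 : Real.sqrt a / z < 1 := (div_lt_one hz0).mpr hz1
  have A : HasDerivAt (fun w : ℝ => Li2 (Real.sqrt a * w))
      (-Real.log (1 - Real.sqrt a * z) / z) z := by
    have h := (li2_hasDerivAt h1 hz2).comp z ((hasDerivAt_id z).const_mul (Real.sqrt a))
    refine h.congr_deriv ?_
    field_simp
  have B : HasDerivAt (fun w : ℝ => Li2 (Real.sqrt a / w))
      (Real.log (1 - Real.sqrt a / z) / z) z := by
    have hinner : HasDerivAt (fun w : ℝ => Real.sqrt a / w)
        (Real.sqrt a * (-(z ^ 2)⁻¹)) z := by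
      simpa [div_eq_mul_inv] using (hasDerivAt_inv hz0.ne').const_mul (Real.sqrt a)
    have h := (li2_hasDerivAt h3 h4).comp z hinner
    refine h.congr_deriv ?_
    field_simp
  have C : HasDerivAt Real.log z⁻¹ z := Real.hasDerivAt_log hz0.ne'
  have D := ((A.const_mul η⁻¹).sub (B.const_mul θ⁻¹)).sub (C.const_mul (vc a η θ))
  refine D.congr_deriv ?_
  field_simp

end Statement13Aux

/-- the saddle point data: `0 < b z_c < 1`, `0 < b / z_c < 1`, `S` is twice
differentiable at `z_c` and `S'(z_c) = S''(z_c) = 0`. -/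
theorem statement13 (a η θ : ℝ) (ha0 : 0 < a) (ha1 : a < 1) (hη : 0 < η) (hθ : 0 < θ) :
    0 < Real.sqrt a * zc a η θ ∧ Real.sqrt a * zc a η θ < 1 ∧
    0 < Real.sqrt a / zc a η θ ∧ Real.sqrt a / zc a η θ < 1 ∧
    DifferentiableAt ℝ (Sfun a η θ) (zc a η θ) ∧
    DifferentiableAt ℝ (deriv (Sfun a η θ)) (zc a η θ) ∧
    deriv (Sfun a η θ) (zc a η θ) = 0 ∧
    deriv (deriv (Sfun a η θ)) (zc a η θ) = 0 := by
  have hb : 0 < Real.sqrt a := Real.sqrt_pos.mpr ha0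
  have hz : 0 < zc a η θ := zc_pos a η θ ha0 hη hθ
  have hgt : Real.sqrt a < zc a η θ := zc_gt a η θ ha0 ha1 hη hθ
  have hlt : Real.sqrt a * zc a η θ < 1 := zc_lt a η θ ha0 ha1 hη hθ
  have hq := zc_quad a η θ ha0 hη hθ
  have h1 : 0 < Real.sqrt a * zc a η θ := mul_pos hb hz
  have h3 : 0 < Real.sqrt a / zc a η θ := div_pos hb hz
  have h4 : Real.sqrt a / zc a η θ < 1 := (div_lt_one hz).mpr hgt
  have hlog1 : (1 - Real.sqrt a * zc a η θ) ≠ 0 := by intro h; rw [sub_eq_zero] at h; linarith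
  have hlog2 : (1 - Real.sqrt a / zc a η θ) ≠ 0 := by intro h; rw [sub_eq_zero] at h; linarith
  set Sd : ℝ → ℝ := fun w =>
    (-η⁻¹ * Real.log (1 - Real.sqrt a * w) - θ⁻¹ * Real.log (1 - Real.sqrt a / w)
      - vc a η θ) / w with hSddef
  have hopen : IsOpen {w : ℝ | Real.sqrt a < w ∧ Real.sqrt a * w < 1} :=
    IsOpen.and (isOpen_lt continuous_const continuous_id)
      (isOpen_lt (continuous_const.mul continuous_id) continuous_const)
  have hnhds : {w : ℝ | Real.sqrt a < w ∧ Real.sqrt a * w < 1} ∈ 𝓝 (zc a η θ) :=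
    hopen.mem_nhds ⟨hgt, hlt⟩
  have hev : deriv (Sfun a η θ) =ᶠ[𝓝 (zc a η θ)] Sd :=
    Filter.eventuallyEq_of_mem hnhds
      (fun w hw => (sfun_hasDerivAt a η θ ha0 hη hθ hw.1 hw.2).deriv)
  have hmain := sfun_hasDerivAt a η θ ha0 hη hθ hgt hlt
  have hNz : -η⁻¹ * Real.log (1 - Real.sqrt a * zc a η θ)
      - θ⁻¹ * Real.log (1 - Real.sqrt a / zc a η θ) - vc a η θ = 0 := by
    simp only [vc]; ring
  -- derivative of Sd at zc
  have hA : HasDerivAt (fun w : ℝ => Real.log (1 - Real.sqrt a * w))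
      ((0 - Real.sqrt a * 1) / (1 - Real.sqrt a * zc a η θ)) (zc a η θ) := by
    have hinner : HasDerivAt (fun w : ℝ => 1 - Real.sqrt a * w) (0 - Real.sqrt a * 1)
        (zc a η θ) := (hasDerivAt_const _ (1:ℝ)).sub ((hasDerivAt_id _).const_mul (Real.sqrt a))
    exact hinner.log hlog1
  have hB : HasDerivAt (fun w : ℝ => Real.log (1 - Real.sqrt a / w))
      ((0 - Real.sqrt a * -((zc a η θ) ^ 2)⁻¹) / (1 - Real.sqrt a / zc a η θ)) (zc a η θ) := by
    have hinner2 : HasDerivAt (fun w : ℝ => Real.sqrt a / w)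
        (Real.sqrt a * -((zc a η θ) ^ 2)⁻¹) (zc a η θ) := by
      simpa [div_eq_mul_inv] using (hasDerivAt_inv hz.ne').const_mul (Real.sqrt a)
    have hinner : HasDerivAt (fun w : ℝ => 1 - Real.sqrt a / w)
        (0 - Real.sqrt a * -((zc a η θ) ^ 2)⁻¹) (zc a η θ) :=
      (hasDerivAt_const _ (1:ℝ)).sub hinner2
    exact hinner.log hlog2
  have hN : HasDerivAt (fun w : ℝ =>
      -η⁻¹ * Real.log (1 - Real.sqrt a * w) - θ⁻¹ * Real.log (1 - Real.sqrt a / w) - vc a η θ)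
      (-η⁻¹ * ((0 - Real.sqrt a * 1) / (1 - Real.sqrt a * zc a η θ))
        - θ⁻¹ * ((0 - Real.sqrt a * -((zc a η θ) ^ 2)⁻¹) / (1 - Real.sqrt a / zc a η θ)))
      (zc a η θ) :=
    ((hA.const_mul (-η⁻¹)).sub (hB.const_mul θ⁻¹)).sub_const _
  have hNV : -η⁻¹ * ((0 - Real.sqrt a * 1) / (1 - Real.sqrt a * zc a η θ))
      - θ⁻¹ * ((0 - Real.sqrt a * -((zc a η θ) ^ 2)⁻¹) / (1 - Real.sqrt a / zc a η θ)) = 0 := by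
    have hzs : zc a η θ - Real.sqrt a ≠ 0 := sub_ne_zero.mpr (ne_of_gt hgt)
    have e2 : (1 - Real.sqrt a / zc a η θ) = (zc a η θ - Real.sqrt a) / zc a η θ := by
      field_simp
    rw [e2]
    field_simp
    linear_combination (Real.sqrt a) * hq
  have hSd : HasDerivAt Sd
      (((-η⁻¹ * ((0 - Real.sqrt a * 1) / (1 - Real.sqrt a * zc a η θ))
        - θ⁻¹ * ((0 - Real.sqrt a * -((zc a η θ) ^ 2)⁻¹) / (1 - Real.sqrt a / zc a η θ)))
          * zc a η θ -
        (-η⁻¹ * Real.log (1 - Real.sqrt a * zc a η θ)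
          - θ⁻¹ * Real.log (1 - Real.sqrt a / zc a η θ) - vc a η θ) * 1) / zc a η θ ^ 2)
      (zc a η θ) := hN.div (hasDerivAt_id _) hz.ne'
  refine ⟨h1, hlt, h3, h4, hmain.differentiableAt, ?_, ?_, ?_⟩
  · exact (Filter.EventuallyEq.differentiableAt_iff hev).mpr hSd.differentiableAt
  · rw [hmain.deriv, hNz, zero_div]
  · rw [hev.deriv_eq, hSd.deriv, hNz, hNV]
    simp

end
end

section
/- Fix a real β>0. For ε>0 let X_ε~Geom(e^{−βε}). Then for every x∈(0,1], lim_{ε→0+} P(e^{−ε·X_ε} ≤ x) = x^β; that is, e^{−ε·X_ε} converges in distribution to a Pow(β) random variable as ε→0+. -/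
open MeasureTheory Filter Topology Set

noncomputable section



/-- if `X_ε ~ Geom(e^{-βε})` then `e^{-ε X_ε}` converges in distribution to
a `Pow(β)` random variable as `ε → 0+`. -/
theorem statement15 (β : ℝ) (hβ : 0 < β)
    {Ω : Type*} [MeasurableSpace Ω] (μ : Measure Ω) [IsProbabilityMeasure μ]
    (X : ℝ → Ω → ℕ)
    (hdist : ∀ ε : ℝ, 0 < ε → ∀ k : ℕ,
      μ {ω | X ε ω = k} =
        ENNReal.ofReal ((1 - Real.exp (-β * ε)) * Real.exp (-β * ε) ^ k)) :
    ∀ x ∈ Set.Ioc (0 : ℝ) 1,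
      Tendsto (fun ε : ℝ => (μ {ω | Real.exp (-ε * (X ε ω : ℝ)) ≤ x}).toReal)
        (𝓝[>] 0) (𝓝 (x ^ β)) := by
  intro x hx
  obtain ⟨hx0, hx1⟩ := hx
  set c : ℝ := -Real.log x with hc_def
  have hc : 0 ≤ c := by
    have := Real.log_nonpos hx0.le hx1
    simp only [hc_def]; linarith
  have key : ∀ ε : ℝ, 0 < ε →
      (μ {ω | Real.exp (-ε * (X ε ω : ℝ)) ≤ x}).toReal
        = Real.exp (-β * (ε * (⌈c / ε⌉₊ : ℝ))) := by
    intro ε hε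
    set u : ℝ := Real.exp (-β * ε) with hu_def
    have hu0 : 0 < u := Real.exp_pos _
    have hu1 : u < 1 := by
      rw [hu_def, Real.exp_lt_one_iff]
      nlinarith
    set n : ℕ := ⌈c / ε⌉₊ with hn_def
    have hun : u ^ n ≤ 1 := pow_le_one₀ hu0.le hu1.le
    have hset : {ω | Real.exp (-ε * (X ε ω : ℝ)) ≤ x} = {ω | n ≤ X ε ω} := by
      ext ω
      simp only [Set.mem_setOf_eq]
      rw [← Real.le_log_iff_exp_le hx0, hn_def, Nat.ceil_le, div_le_iff₀ hε]
      constructor <;> intro h <;> nlinarith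
    have hA_sub : {ω | n ≤ X ε ω} ⊆ ⋃ k : ℕ, {ω | X ε ω = n + k} := by
      intro ω hω
      simp only [Set.mem_setOf_eq] at hω
      exact Set.mem_iUnion.2 ⟨X ε ω - n, by simp only [Set.mem_setOf_eq]; omega⟩
    have hsummable : Summable fun k : ℕ => (1 - u) * u ^ (n + k) := by
      have := (summable_geometric_of_lt_one hu0.le hu1).mul_left ((1 - u) * u ^ n)
      refine this.congr fun k => ?_
      rw [pow_add]; ring
    have hsum_tail : ∑' k : ℕ, μ {ω | X ε ω = n + k} = ENNReal.ofReal (u ^ n) := by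
      have h1 : ∀ k : ℕ, μ {ω | X ε ω = n + k}
          = ENNReal.ofReal ((1 - u) * u ^ (n + k)) := fun k => hdist ε hε (n + k)
      simp_rw [h1]
      rw [← ENNReal.ofReal_tsum_of_nonneg (fun k => mul_nonneg (by linarith) (by positivity)) hsummable]
      congr 1
      have heq : ∀ k : ℕ, (1 - u) * u ^ (n + k) = ((1 - u) * u ^ n) * u ^ k := by
        intro k; rw [pow_add]; ring
      simp_rw [heq]
      rw [tsum_mul_left, tsum_geometric_of_lt_one hu0.le hu1]
      have h1u : (1 : ℝ) - u ≠ 0 := by linarith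
      field_simp
    have hμA_le : μ {ω | n ≤ X ε ω} ≤ ENNReal.ofReal (u ^ n) :=
      (measure_mono hA_sub).trans ((measure_iUnion_le _).trans hsum_tail.le)
    have hB_sub : {ω | n ≤ X ε ω}ᶜ ⊆ ⋃ k : Fin n, {ω | X ε ω = (k : ℕ)} := by
      intro ω hω
      simp only [Set.mem_compl_iff, Set.mem_setOf_eq, not_le] at hω
      exact Set.mem_iUnion.2 ⟨⟨X ε ω, hω⟩, rfl⟩
    have hμB_le : μ ({ω | n ≤ X ε ω}ᶜ) ≤ ENNReal.ofReal (1 - u ^ n) := by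
      refine (measure_mono hB_sub).trans ((measure_iUnion_le _).trans ?_)
      rw [tsum_fintype]
      simp_rw [hdist ε hε]
      rw [← ENNReal.ofReal_sum_of_nonneg (fun k _ => mul_nonneg (by linarith) (by positivity))]
      apply ENNReal.ofReal_le_ofReal
      rw [Fin.sum_univ_eq_sum_range (fun k => (1 - u) * u ^ k)]
      have h := geom_sum_mul u n
      have : ∑ k ∈ Finset.range n, (1 - u) * u ^ k
          = (1 - u) * ∑ k ∈ Finset.range n, u ^ k := by rw [Finset.mul_sum]
      rw [this]
      linear_combination -h
    have hsum1 : ENNReal.ofReal (u ^ n) + ENNReal.ofReal (1 - u ^ n) = 1 := by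
      rw [← ENNReal.ofReal_add (by positivity) (by linarith)]
      norm_num
    have hge : ENNReal.ofReal (u ^ n) ≤ μ {ω | n ≤ X ε ω} := by
      have h3 : (1 : ENNReal) ≤ μ {ω | n ≤ X ε ω} + μ ({ω | n ≤ X ε ω}ᶜ) := by
        calc (1 : ENNReal) = μ Set.univ := (measure_univ (μ := μ)).symm
          _ = μ ({ω | n ≤ X ε ω} ∪ {ω | n ≤ X ε ω}ᶜ) := by rw [Set.union_compl_self]
          _ ≤ _ := measure_union_le _ _
      have h4 : (1 : ENNReal) ≤ μ {ω | n ≤ X ε ω} + ENNReal.ofReal (1 - u ^ n) :=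
        h3.trans (add_le_add le_rfl hμB_le)
      rw [← hsum1] at h4
      exact (ENNReal.add_le_add_iff_right ENNReal.ofReal_ne_top).mp h4
    have hμA : μ {ω | n ≤ X ε ω} = ENNReal.ofReal (u ^ n) := le_antisymm hμA_le hge
    have hres : μ {ω | Real.exp (-ε * (X ε ω : ℝ)) ≤ x} = ENNReal.ofReal (u ^ n) := by
      rw [hset]; exact hμA
    rw [hres, ENNReal.toReal_ofReal (by positivity), hu_def, ← Real.exp_nat_mul]
    congr 1
    ring
  have h0 : Tendsto (fun ε : ℝ => ε) (𝓝[>] (0:ℝ)) (𝓝 0) :=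
    tendsto_id.mono_left nhdsWithin_le_nhds
  have hφ : Tendsto (fun ε : ℝ => ε * (⌈c / ε⌉₊ : ℝ)) (𝓝[>] (0:ℝ)) (𝓝 c) := by
    have hco : Tendsto (fun _ : ℝ => c) (𝓝[>] (0:ℝ)) (𝓝 c) := tendsto_const_nhds
    have hup : Tendsto (fun ε : ℝ => c + ε) (𝓝[>] (0:ℝ)) (𝓝 c) := by
      simpa using hco.add h0
    apply tendsto_of_tendsto_of_tendsto_of_le_of_le' hco hup
    · filter_upwards [self_mem_nhdsWithin] with ε (hε : 0 < ε)
      have h1 : c / ε ≤ (⌈c / ε⌉₊ : ℝ) := Nat.le_ceil _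
      have h2 : ε * (c / ε) = c := by field_simp
      nlinarith
    · filter_upwards [self_mem_nhdsWithin] with ε (hε : 0 < ε)
      have h1 : (⌈c / ε⌉₊ : ℝ) < c / ε + 1 := Nat.ceil_lt_add_one (by positivity)
      have h2 : ε * (c / ε) = c := by field_simp
      nlinarith
  have hlim : Tendsto (fun ε : ℝ => Real.exp (-β * (ε * (⌈c / ε⌉₊ : ℝ))))
      (𝓝[>] (0:ℝ)) (𝓝 (x ^ β)) := by
    have hxβ : x ^ β = Real.exp (-β * c) := by
      rw [Real.rpow_def_of_pos hx0]
      congr 1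
      simp only [hc_def]; ring
    rw [hxβ]
    exact (Real.continuous_exp.tendsto _).comp (hφ.const_mul (-β))
  refine hlim.congr' ?_
  filter_upwards [self_mem_nhdsWithin] with ε (hε : 0 < ε) using (key ε hε).symm


end
end
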